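/- (Equivalence of the LPS bilinear form and the LPS energy semi-norm.) Assume λ ≥ μ ≥ 0. Then for every essentially bounded u ∈ L²(Ω̄; ℝ²) the two-sided bound (C₂μ/2) · |||u|||²_{LPS} ≤ a^{LPS}(u, u) ≤ (2C₁(λ−μ) + C₂μ/2) · |||u|||²_{LPS} holds; in particular a^{LPS}(u,u) is equivalent to the squared LPS energy semi-norm. -/

import Mathlib

open MeasureTheory
open scoped RealInnerProductSpace

local notation "E" => EuclideanSpace ℝ (Fin 2)

set_option maxHeartbeats 1600000

/-- Equivalence of the LPS bilinear form and the LPS energy semi-norm: for `λ ≥ μ ≥ 0`,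
`(C₂μ/2)·|||u|||²_{LPS} ≤ a^{LPS}(u,u) ≤ (2C₁(λ−μ) + C₂μ/2)·|||u|||²_{LPS}`
with `C₁ = 2`, `C₂ = 16`. -/
theorem lps_bilinear_form_energy_equivalence
    (δ : ℝ) (hδ : 0 < δ) (lam mu : ℝ) (hmu : 0 ≤ mu) (hlam : mu ≤ lam)
    (Ω ΩI : Set (EuclideanSpace ℝ (Fin 2)))
    (hΩ_open : IsOpen Ω) (hΩ_ne : Ω.Nonempty) (hΩ_bdd : Bornology.IsBounded Ω)
    (hΩI_sub : ΩI ⊆ Ωᶜ) (hΩI_meas : MeasurableSet ΩI)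
    (hfin : volume (Ω ∪ ΩI) < ⊤)
    (γ : ℝ → ℝ) (hγ_meas : Measurable γ) (hγ_nonneg : ∀ r, 0 ≤ γ r)
    (hγ_supp : ∀ r, δ ≤ r → γ r = 0)
    (hγ_int : Integrable (fun h : EuclideanSpace ℝ (Fin 2) => γ ‖h‖))
    (m : ℝ) (hm : 0 < m)
    (hm_def : (∫ h : EuclideanSpace ℝ (Fin 2), γ ‖h‖ * ‖h‖ ^ 2) = m)
    (u : EuclideanSpace ℝ (Fin 2) → EuclideanSpace ℝ (Fin 2))
    (hu2 : MemLp u 2 (volume.restrict (Ω ∪ ΩI)))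
    (hu_inf : MemLp u ⊤ (volume.restrict (Ω ∪ ΩI)))
    (Du : EuclideanSpace ℝ (Fin 2) → ℝ)
    (hDu : ∀ p, Du p = ∫ y in Ω ∪ ΩI, γ ‖y - p‖ * ⟪y - p, u y - u p⟫) :
    (16 * mu / 2) *
        ((1 / m) * ∫ x in Ω ∪ ΩI, ∫ y in Ω ∪ ΩI,
          γ ‖y - x‖ * ⟪u y - u x, y - x⟫ ^ 2 / ‖y - x‖ ^ 2) ≤
      (2 * 2 * (lam - mu) / m ^ 2) * (∫ x in Ω ∪ ΩI, Du x * Du x) +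
        (16 * mu / (2 * m)) * ∫ x in Ω ∪ ΩI, ∫ y in Ω ∪ ΩI,
          γ ‖y - x‖ * (⟪u y - u x, y - x⟫ * ⟪u y - u x, y - x⟫) / ‖y - x‖ ^ 2 ∧
    (2 * 2 * (lam - mu) / m ^ 2) * (∫ x in Ω ∪ ΩI, Du x * Du x) +
        (16 * mu / (2 * m)) * ∫ x in Ω ∪ ΩI, ∫ y in Ω ∪ ΩI,
          γ ‖y - x‖ * (⟪u y - u x, y - x⟫ * ⟪u y - u x, y - x⟫) / ‖y - x‖ ^ 2 ≤
      (2 * 2 * (lam - mu) + 16 * mu / 2) *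
        ((1 / m) * ∫ x in Ω ∪ ΩI, ∫ y in Ω ∪ ΩI,
          γ ‖y - x‖ * ⟪u y - u x, y - x⟫ ^ 2 / ‖y - x‖ ^ 2) := by
  set S : Set (EuclideanSpace ℝ (Fin 2)) := Ω ∪ ΩI with hS_def
  set ν : Measure (EuclideanSpace ℝ (Fin 2)) := volume.restrict S with hν_def
  haveI hν_fin : IsFiniteMeasure ν := ⟨by rw [hν_def, Measure.restrict_apply_univ]; exact hfin⟩
  -- basic integrability of γ‖·‖ translated
  have hγx : ∀ x : E, Integrable (fun y : E => γ ‖y - x‖) volume := fun x =>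
    hγ_int.comp_sub_right x
  have hγ2_int : Integrable (fun h : E => γ ‖h‖ * ‖h‖ ^ 2) volume := by
    refine (hγ_int.const_mul (δ ^ 2)).mono' ?_ ?_
    · exact ((hγ_meas.comp measurable_norm).mul (measurable_norm.pow_const 2)).aestronglyMeasurable
    · refine Filter.Eventually.of_forall fun h => ?_
      rw [Real.norm_eq_abs, abs_of_nonneg (mul_nonneg (hγ_nonneg _) (sq_nonneg _))]
      rcases le_or_gt δ ‖h‖ with hle | hlt
      · rw [hγ_supp _ hle]
        simp [mul_nonneg (sq_nonneg δ) (hγ_nonneg _)]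
      · have h1 : ‖h‖ ^ 2 ≤ δ ^ 2 := by nlinarith [norm_nonneg h]
        have := mul_le_mul_of_nonneg_left h1 (hγ_nonneg ‖h‖)
        linarith
  have hγ2x : ∀ x : E, Integrable (fun y : E => γ ‖y - x‖ * ‖y - x‖ ^ 2) volume := fun x =>
    hγ2_int.comp_sub_right x
  have hγ2x_val : ∀ x : E, (∫ y : E, γ ‖y - x‖ * ‖y - x‖ ^ 2) = m := fun x => by
    rw [← hm_def]; exact integral_sub_right_eq_self (fun h : E => γ ‖h‖ * ‖h‖ ^ 2) x
  have hA_le : ∀ x : E, (∫ y in S, γ ‖y - x‖ * ‖y - x‖ ^ 2) ≤ m := fun x => by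
    rw [← hγ2x_val x]
    exact setIntegral_le_integral (hγ2x x)
      (Filter.Eventually.of_forall fun y => mul_nonneg (hγ_nonneg _) (sq_nonneg _))
  have hA_nonneg : ∀ x : E, 0 ≤ ∫ y in S, γ ‖y - x‖ * ‖y - x‖ ^ 2 := fun x =>
    integral_nonneg fun y => mul_nonneg (hγ_nonneg _) (sq_nonneg _)
  -- essential sup bound
  set C : ℝ := (eLpNorm u ⊤ ν).toReal with hC_def
  have hC : ∀ᵐ y ∂ν, ‖u y‖ ≤ C := by
    have h1 : ∀ᵐ y ∂ν, (‖u y‖₊ : ENNReal) ≤ eLpNormEssSup u ν := ae_le_eLpNormEssSup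
    have htop : eLpNormEssSup u ν ≠ ⊤ := by
      have := hu_inf.2
      rw [eLpNorm_exponent_top] at this
      exact this.ne
    filter_upwards [h1] with y hy
    have h2 := ENNReal.toReal_mono htop hy
    rw [ENNReal.coe_toReal, coe_nnnorm] at h2
    rwa [hC_def, eLpNorm_exponent_top]
  have hC0 : 0 ≤ C := ENNReal.toReal_nonneg
  -- pointwise inner-product bound
  have hinner : ∀ v w : E, ⟪v, w⟫ ^ 2 / ‖w‖ ^ 2 ≤ ‖v‖ ^ 2 := by
    intro v w
    rcases eq_or_ne w 0 with rfl | hw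
    · simp
    · rw [div_le_iff₀ (pow_pos (norm_pos_iff.mpr hw) 2)]
      have h := abs_real_inner_le_norm v w
      calc ⟪v, w⟫ ^ 2 = |⟪v, w⟫| ^ 2 := (sq_abs _).symm
        _ ≤ (‖v‖ * ‖w‖) ^ 2 := pow_le_pow_left₀ (abs_nonneg _) h 2
        _ = ‖v‖ ^ 2 * ‖w‖ ^ 2 := by ring
  have hG_nonneg : ∀ x y : E, 0 ≤ γ ‖y - x‖ * ⟪u y - u x, y - x⟫ ^ 2 / ‖y - x‖ ^ 2 :=
    fun x y => div_nonneg (mul_nonneg (hγ_nonneg _) (sq_nonneg _)) (sq_nonneg _)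
  set Φ : E → ℝ := fun x => ∫ y in S, γ ‖y - x‖ * ⟪u y - u x, y - x⟫ ^ 2 / ‖y - x‖ ^ 2
    with hΦ_def
  have hΦ_nonneg : ∀ x, 0 ≤ Φ x := fun x => integral_nonneg fun y => hG_nonneg x y
  -- Cauchy–Schwarz key pointwise bound
  have hkey : ∀ x : E, Du x * Du x ≤ m * Φ x := by
    intro x
    set f : E → ℝ := fun y => Real.sqrt (γ ‖y - x‖) * ‖y - x‖ with hf_def
    set g : E → ℝ := fun y => Real.sqrt (γ ‖y - x‖) * (⟪u y - u x, y - x⟫ / ‖y - x‖)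
      with hg_def
    have hfg : ∀ y : E, f y * g y = γ ‖y - x‖ * ⟪y - x, u y - u x⟫ := by
      intro y
      rcases eq_or_ne y x with rfl | hyx
      · simp [hf_def, hg_def]
      · have hn : ‖y - x‖ ≠ 0 := by
          simpa [sub_eq_zero] using hyx
        have h1 : f y * g y =
            (Real.sqrt (γ ‖y - x‖) * Real.sqrt (γ ‖y - x‖)) *
              (‖y - x‖ * (⟪u y - u x, y - x⟫ / ‖y - x‖)) := by
          rw [hf_def, hg_def]; ring
        rw [h1, Real.mul_self_sqrt (hγ_nonneg _), real_inner_comm (y - x)]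
        congr 1
        field_simp
    have hDufg : Du x = ∫ y in S, f y * g y := by
      rw [hDu x]
      exact (integral_congr_ae (Filter.Eventually.of_forall fun y => hfg y)).symm
    have hmeas_sub : Measurable (fun y : E => y - x) := measurable_id.sub measurable_const
    have hf_measM : Measurable f :=
      ((hγ_meas.comp hmeas_sub.norm).sqrt).mul hmeas_sub.norm
    have hf_meas : AEStronglyMeasurable f ν := hf_measM.aestronglyMeasurable
    have hf2 : ∀ y, f y ^ 2 = γ ‖y - x‖ * ‖y - x‖ ^ 2 := fun y => by
      rw [hf_def, mul_pow, Real.sq_sqrt (hγ_nonneg _)]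
    have hf_mem : MemLp f 2 ν := by
      refine (memLp_two_iff_integrable_sq hf_meas).mpr ?_
      exact ((hγ2x x).restrict (s := S)).congr
        (Filter.Eventually.of_forall fun y => (hf2 y).symm)
    have hg_meas : AEStronglyMeasurable g ν := by
      have h1 : AEStronglyMeasurable (fun y => ⟪u y - u x, y - x⟫) ν :=
        (hu2.1.sub aestronglyMeasurable_const).inner hmeas_sub.aestronglyMeasurable
      exact ((hγ_meas.comp hmeas_sub.norm).sqrt.aestronglyMeasurable).mul
        (h1.aemeasurable.div hmeas_sub.norm.aemeasurable).aestronglyMeasurable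
    have hg2 : ∀ y, g y ^ 2 = γ ‖y - x‖ * ⟪u y - u x, y - x⟫ ^ 2 / ‖y - x‖ ^ 2 := fun y => by
      rw [hg_def, mul_pow, Real.sq_sqrt (hγ_nonneg _), div_pow, mul_div_assoc]
    have hg_sq_int : Integrable (fun y => g y ^ 2) ν := by
      refine Integrable.mono' (((hγx x).restrict (s := S)).const_mul ((C + ‖u x‖) ^ 2))
        (hg_meas.pow 2) ?_
      filter_upwards [hC] with y hy
      rw [Real.norm_eq_abs, hg2 y,
        abs_of_nonneg (div_nonneg (mul_nonneg (hγ_nonneg _) (sq_nonneg _)) (sq_nonneg _))]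
      have h2 : ⟪u y - u x, y - x⟫ ^ 2 / ‖y - x‖ ^ 2 ≤ ‖u y - u x‖ ^ 2 := hinner _ _
      have h3 : ‖u y - u x‖ ≤ C + ‖u x‖ := (norm_sub_le _ _).trans (by linarith)
      have h4 : ‖u y - u x‖ ^ 2 ≤ (C + ‖u x‖) ^ 2 :=
        pow_le_pow_left₀ (norm_nonneg _) h3 2
      have h5 := mul_le_mul_of_nonneg_left (h2.trans h4) (hγ_nonneg ‖y - x‖)
      rw [mul_div_assoc]
      linarith
    have hg_mem : MemLp g 2 ν := (memLp_two_iff_integrable_sq hg_meas).mpr hg_sq_int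
    have hpq : Real.HolderConjugate 2 2 := Real.HolderConjugate.two_two
    have h2e : ENNReal.ofReal (2 : ℝ) = 2 := by norm_num
    have hCS := integral_mul_norm_le_Lp_mul_Lq (μ := ν) hpq
      (by rw [h2e]; exact hf_mem) (by rw [h2e]; exact hg_mem)
    have hfn : ∀ y, ‖f y‖ ^ (2 : ℝ) = γ ‖y - x‖ * ‖y - x‖ ^ 2 := fun y => by
      rw [Real.rpow_two, Real.norm_eq_abs, sq_abs, hf2]
    have hgn : ∀ y, ‖g y‖ ^ (2 : ℝ) = γ ‖y - x‖ * ⟪u y - u x, y - x⟫ ^ 2 / ‖y - x‖ ^ 2 :=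
      fun y => by rw [Real.rpow_two, Real.norm_eq_abs, sq_abs, hg2]
    rw [integral_congr_ae (Filter.Eventually.of_forall hfn),
      integral_congr_ae (Filter.Eventually.of_forall hgn)] at hCS
    set A : ℝ := ∫ y in S, γ ‖y - x‖ * ‖y - x‖ ^ 2 with hA_def
    have hDu_abs : |Du x| ≤ A ^ ((1 : ℝ) / 2) * Φ x ^ ((1 : ℝ) / 2) := by
      calc |Du x| = ‖∫ y in S, f y * g y‖ := by rw [hDufg, Real.norm_eq_abs]
        _ ≤ ∫ y in S, ‖f y * g y‖ := norm_integral_le_integral_norm _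
        _ = ∫ y in S, ‖f y‖ * ‖g y‖ := by
            exact integral_congr_ae (Filter.Eventually.of_forall fun y => norm_mul _ _)
        _ ≤ A ^ ((1 : ℝ) / 2) * Φ x ^ ((1 : ℝ) / 2) := hCS
    have hDu_abs' : |Du x| ≤ Real.sqrt A * Real.sqrt (Φ x) := by
      rw [Real.sqrt_eq_rpow, Real.sqrt_eq_rpow]; exact hDu_abs
    have hstep : Real.sqrt A * Real.sqrt (Φ x) ≤ Real.sqrt m * Real.sqrt (Φ x) :=
      mul_le_mul_of_nonneg_right (Real.sqrt_le_sqrt (hA_le x)) (Real.sqrt_nonneg _)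
    have habs : Du x * Du x = |Du x| * |Du x| := (abs_mul_abs_self _).symm
    rw [habs]
    calc |Du x| * |Du x| ≤ (Real.sqrt m * Real.sqrt (Φ x)) * (Real.sqrt m * Real.sqrt (Φ x)) :=
          mul_self_le_mul_self (abs_nonneg _) (hDu_abs'.trans hstep)
      _ = (Real.sqrt m * Real.sqrt m) * (Real.sqrt (Φ x) * Real.sqrt (Φ x)) := by ring
      _ = m * Φ x := by
          rw [Real.mul_self_sqrt hm.le, Real.mul_self_sqrt (hΦ_nonneg x)]
  -- measurability of Φ
  have hΦ_meas : AEStronglyMeasurable Φ ν := by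
    have hsub : Measurable (fun z : E × E => z.2 - z.1) := measurable_snd.sub measurable_fst
    have h1 : AEStronglyMeasurable (fun z : E × E => u z.2) (ν.prod ν) := hu2.1.comp_snd
    have h2 : AEStronglyMeasurable (fun z : E × E => u z.1) (ν.prod ν) := hu2.1.comp_fst
    have hin : AEStronglyMeasurable (fun z : E × E => ⟪u z.2 - u z.1, z.2 - z.1⟫) (ν.prod ν) :=
      (h1.sub h2).inner hsub.aestronglyMeasurable
    have hprod : AEStronglyMeasurable
        (fun z : E × E => γ ‖z.2 - z.1‖ * ⟪u z.2 - u z.1, z.2 - z.1⟫ ^ 2 / ‖z.2 - z.1‖ ^ 2)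
        (ν.prod ν) :=
      ((((hγ_meas.comp hsub.norm).aestronglyMeasurable).mul (hin.pow 2)).aemeasurable.div
        (hsub.norm.pow_const 2).aemeasurable).aestronglyMeasurable
    exact hprod.integral_prod_right'
  have hΦ_bdd : ∀ᵐ x ∂ν, ‖Φ x‖ ≤ (C + C) ^ 2 * ∫ h : E, γ ‖h‖ := by
    filter_upwards [hC] with x hx
    rw [Real.norm_eq_abs, abs_of_nonneg (hΦ_nonneg x)]
    have hbound : ∀ᵐ y ∂ν,
        γ ‖y - x‖ * ⟪u y - u x, y - x⟫ ^ 2 / ‖y - x‖ ^ 2 ≤ (C + C) ^ 2 * γ ‖y - x‖ := by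
      filter_upwards [hC] with y hy
      have h2 : ⟪u y - u x, y - x⟫ ^ 2 / ‖y - x‖ ^ 2 ≤ ‖u y - u x‖ ^ 2 := hinner _ _
      have h3 : ‖u y - u x‖ ≤ C + C := (norm_sub_le _ _).trans (by linarith)
      have h4 : ‖u y - u x‖ ^ 2 ≤ (C + C) ^ 2 := pow_le_pow_left₀ (norm_nonneg _) h3 2
      have h5 := mul_le_mul_of_nonneg_left (h2.trans h4) (hγ_nonneg ‖y - x‖)
      rw [mul_div_assoc]
      linarith
    have hint : Integrable (fun y => (C + C) ^ 2 * γ ‖y - x‖) ν :=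
      ((hγx x).restrict (s := S)).const_mul _
    calc Φ x ≤ ∫ y in S, (C + C) ^ 2 * γ ‖y - x‖ :=
          integral_mono_of_nonneg (Filter.Eventually.of_forall (hG_nonneg x)) hint hbound
      _ = (C + C) ^ 2 * ∫ y in S, γ ‖y - x‖ := integral_const_mul _ _
      _ ≤ (C + C) ^ 2 * ∫ h : E, γ ‖h‖ := by
          refine mul_le_mul_of_nonneg_left ?_ (sq_nonneg _)
          have h6 : (∫ y in S, γ ‖y - x‖) ≤ ∫ y : E, γ ‖y - x‖ :=
            setIntegral_le_integral (hγx x)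
              (Filter.Eventually.of_forall fun y => hγ_nonneg _)
          have h7 : (∫ y : E, γ ‖y - x‖) = ∫ h : E, γ ‖h‖ :=
            integral_sub_right_eq_self (fun h : E => γ ‖h‖) x
          linarith
  have hΦ_int : Integrable Φ ν :=
    Integrable.mono' (integrable_const _) hΦ_meas hΦ_bdd
  -- the main integral inequality J ≤ m * Isq
  have hJI : (∫ x in S, Du x * Du x) ≤
      m * ∫ x in S, ∫ y in S, γ ‖y - x‖ * ⟪u y - u x, y - x⟫ ^ 2 / ‖y - x‖ ^ 2 := by
    have h1 : (∫ x in S, Du x * Du x) ≤ ∫ x in S, m * Φ x :=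
      integral_mono_of_nonneg (Filter.Eventually.of_forall fun x => mul_self_nonneg _)
        (hΦ_int.const_mul m) (Filter.Eventually.of_forall hkey)
    rwa [integral_const_mul] at h1
  have hIsq_nonneg : 0 ≤ ∫ x in S, ∫ y in S,
      γ ‖y - x‖ * ⟪u y - u x, y - x⟫ ^ 2 / ‖y - x‖ ^ 2 :=
    integral_nonneg fun x => integral_nonneg fun y => hG_nonneg x y
  have hJ_nonneg : 0 ≤ ∫ x in S, Du x * Du x :=
    integral_nonneg fun x => mul_self_nonneg _
  have hdd : (∫ x in S, ∫ y in S,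
      γ ‖y - x‖ * (⟪u y - u x, y - x⟫ * ⟪u y - u x, y - x⟫) / ‖y - x‖ ^ 2) =
      ∫ x in S, ∫ y in S, γ ‖y - x‖ * ⟪u y - u x, y - x⟫ ^ 2 / ‖y - x‖ ^ 2 := by
    refine integral_congr_ae (Filter.Eventually.of_forall fun x => ?_)
    refine integral_congr_ae (Filter.Eventually.of_forall fun y => ?_)
    simp only [pow_two]
  rw [hdd]
  set Isq : ℝ := ∫ x in S, ∫ y in S, γ ‖y - x‖ * ⟪u y - u x, y - x⟫ ^ 2 / ‖y - x‖ ^ 2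
  set J : ℝ := ∫ x in S, Du x * Du x
  constructor
  · have e1 : (16 * mu / 2) * ((1 / m) * Isq) = (16 * mu / (2 * m)) * Isq := by ring
    have e2 : 0 ≤ (2 * 2 * (lam - mu) / m ^ 2) * J :=
      mul_nonneg (div_nonneg (by linarith) (sq_nonneg m)) hJ_nonneg
    linarith
  · have h1 : (2 * 2 * (lam - mu) / m ^ 2) * J ≤ (2 * 2 * (lam - mu) / m ^ 2) * (m * Isq) :=
      mul_le_mul_of_nonneg_left hJI (div_nonneg (by linarith) (sq_nonneg m))
    have h2 : (2 * 2 * (lam - mu) / m ^ 2) * (m * Isq) = 2 * 2 * (lam - mu) * ((1 / m) * Isq) := by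
      field_simp
    have h3 : (16 * mu / (2 * m)) * Isq = (16 * mu / 2) * ((1 / m) * Isq) := by ring
    have h4 : (2 * 2 * (lam - mu) + 16 * mu / 2) * ((1 / m) * Isq) =
        2 * 2 * (lam - mu) * ((1 / m) * Isq) + (16 * mu / 2) * ((1 / m) * Isq) := by ring
    linarith
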